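/- For every natural number m, C₉(m + 2) ≥ ack 8 m + 4 (the growth estimate F₈(m−2) for column 9 in Table 1, with the trivial improvement +4). -/

import Mathlib

def C0 (m : ℕ) : ℕ := 2 ^ m
def C1 (m : ℕ) : ℕ := 2 ^ m

def C2 : ℕ → ℕ
  | 0 => 0
  | m + 1 => C2 m + 2 ^ (C2 m)

def C3 (m : ℕ) : ℕ := 2 ^ m

def C4 : ℕ → ℕ
  | 0 => 0
  | 1 => 8
  | m + 2 => C4 (m + 1) + C1 (C2 (C3 (C4 (m + 1)))) - 1

def C5 : ℕ → ℕ
  | 0 => 0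
  | 1 => 2
  | m + 2 => C5 (m + 1) + C3 (C4 (C5 (m + 1)))

def C6 (m : ℕ) : ℕ := 2 ^ m

def C7 : ℕ → ℕ
  | 0 => 0
  | m + 1 => C7 m + C1 (C2 (C3 (C4 (C5 (C6 (C7 m)))))) - 8

def C8 (m : ℕ) : ℕ := 2 ^ m

def H (n : ℕ) : ℕ := C1 (C2 (C3 (C4 (C5 n))))
def G (n : ℕ) : ℕ := C1 (C2 (C3 (C4 (C5 (C6 (C7 (C8 n)))))))

def C9 : ℕ → ℕ
  | 0 => 0
  | 1 => G (H 1 - 8) - 8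
  | m + 2 => C9 (m + 1) + G (C9 (m + 1)) - H 1

def C10 : ℕ → ℕ
  | 0 => 0
  | m + 1 => C10 m + C3 (C4 (C5 (C6 (C7 (C8 (C9 (C10 m)))))))

/-! ### Generic helpers -/

lemma sstep {f : ℕ → ℕ} (h : ∀ n, f n + 1 ≤ f (n + 1)) : ∀ b k : ℕ, f b + k ≤ f (b + k) := by
  intro b k
  induction k with
  | zero => simp
  | succ k ih =>
      show f b + (k + 1) ≤ f (b + k + 1)
      have h1 := h (b + k)
      omega

lemma smono {f : ℕ → ℕ} (h : ∀ n, f n + 1 ≤ f (n + 1)) : Monotone f := by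
  apply monotone_nat_of_le_succ
  intro n
  have := h n; omega

lemma pstep : ∀ n : ℕ, 2 ^ n + 1 ≤ 2 ^ (n + 1) := by
  intro n
  have h : 1 ≤ 2 ^ n := Nat.one_le_two_pow
  rw [pow_succ]
  omega

lemma pow_mono {a b : ℕ} (h : a ≤ b) : 2 ^ a ≤ 2 ^ b :=
  smono (f := fun n => 2 ^ n) pstep h

lemma le_two_pow (n : ℕ) : n ≤ 2 ^ n := (Nat.lt_two_pow_self (n := n)).le

lemma lin {x : ℕ} (h : 4 ≤ x) : x + 12 ≤ 2 ^ x := by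
  obtain ⟨k, rfl⟩ := Nat.exists_eq_add_of_le h
  have hk : k + 1 ≤ 2 ^ k := Nat.lt_two_pow_self (n := k)
  have h16 : 16 * (k + 1) ≤ 16 * 2 ^ k := Nat.mul_le_mul_left 16 hk
  have hpow : 2 ^ (4 + k) = 16 * 2 ^ k := by rw [pow_add]; norm_num
  omega

/-! ### Safe unfolding lemmas (never force evaluation of huge closed terms) -/

lemma C2_succ (n : ℕ) : C2 (n + 1) = C2 n + 2 ^ C2 n := rfl

lemma C4_ss (n : ℕ) : C4 (n + 2) = C4 (n + 1) + 2 ^ C2 (2 ^ C4 (n + 1)) - 1 := by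
  rw [C4]; rfl

lemma C5_ss (n : ℕ) : C5 (n + 2) = C5 (n + 1) + 2 ^ C4 (C5 (n + 1)) := by
  rw [C5]; rfl

lemma C7_succ (n : ℕ) : C7 (n + 1) = C7 n + 2 ^ C2 (2 ^ C4 (C5 (2 ^ C7 n))) - 8 := by
  rw [C7]; rfl

lemma G_eq (n : ℕ) : G n = 2 ^ C2 (2 ^ C4 (C5 (2 ^ C7 (2 ^ n)))) := by
  rw [G, C8, C6, C1, C3]

lemma C4_two : C4 2 = 8 + 2 ^ C2 (2 ^ 8) - 1 := by
  have h := C4_ss 0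
  rw [show C4 (0 + 1) = 8 from rfl] at h
  simp only [Nat.zero_add] at h
  exact h

lemma C5_two : C5 2 = 2 + 2 ^ C4 2 := by
  have h := C5_ss 0
  rw [show C5 (0 + 1) = 2 from rfl] at h
  simp only [Nat.zero_add] at h
  exact h

lemma C7_one : C7 1 = 2 ^ C2 (2 ^ C4 2) - 8 := by
  have h := C7_succ 0
  rw [show C7 0 = 0 from rfl] at h
  rw [show C5 (2 ^ 0) = 2 from rfl] at h
  simp only [Nat.zero_add] at h
  exact h

lemma H_one : H 1 = 2 ^ C2 (2 ^ C4 2) := by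
  rw [H, show C5 1 = 2 from rfl, C1, C3]

/-- Auxiliary copy of `C9` with the huge closed constants as parameters, so that
its defining equations are kernel-checkable. -/
def D (a b : ℕ) : ℕ → ℕ
  | 0 => 0
  | 1 => a
  | m + 2 => D a b (m + 1) + G (D a b (m + 1)) - b

lemma C9_eq_D : ∀ x, C9 x = D (G (H 1 - 8) - 8) (H 1) x := by
  intro x
  delta C9 D
  rfl

lemma D_one (a b : ℕ) : D a b 1 = a := rfl

lemma D_ss (a b n : ℕ) : D a b (n + 2) = D a b (n + 1) + G (D a b (n + 1)) - b := rfl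

/-! ### Step lemmas for the C functions -/

lemma c2_step : ∀ n, C2 n + 1 ≤ C2 (n + 1) := by
  intro n
  have h : 1 ≤ 2 ^ C2 n := Nat.one_le_two_pow
  have h2 := C2_succ n
  omega

lemma c2_mono : Monotone C2 := smono c2_step

lemma c2_le (n : ℕ) : n ≤ C2 n := by
  have h1 := sstep c2_step 0 n
  rw [show C2 0 = 0 from rfl, Nat.zero_add] at h1
  exact h1

lemma c4_step : ∀ n, C4 n + 1 ≤ C4 (n + 1) := by
  intro n
  match n with
  | 0 => decide
  | n + 1 =>
      have h1 : C4 (n + 1 + 1) = C4 (n + 1) + 2 ^ C2 (2 ^ C4 (n + 1)) - 1 := C4_ss n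
      have h2 : 1 ≤ 2 ^ C4 (n + 1) := Nat.one_le_two_pow
      have h3 : 1 ≤ C2 (2 ^ C4 (n + 1)) := le_trans h2 (c2_le _)
      have h5 : (2:ℕ) ≤ 2 ^ C2 (2 ^ C4 (n + 1)) := by
        calc (2:ℕ) = 2 ^ 1 := by norm_num
        _ ≤ _ := pow_mono h3
      omega

lemma c4_mono : Monotone C4 := smono c4_step

lemma c4_le (n : ℕ) : n ≤ C4 n := by
  have h1 := sstep c4_step 0 n
  rw [show C4 0 = 0 from rfl, Nat.zero_add] at h1
  exact h1

lemma c5_step : ∀ n, C5 n + 1 ≤ C5 (n + 1) := by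
  intro n
  match n with
  | 0 => decide
  | n + 1 =>
      have h1 : C5 (n + 1 + 1) = C5 (n + 1) + 2 ^ C4 (C5 (n + 1)) := C5_ss n
      have h2 : 1 ≤ 2 ^ C4 (C5 (n + 1)) := Nat.one_le_two_pow
      omega

lemma c5_mono : Monotone C5 := smono c5_step

lemma c5_le (n : ℕ) : n ≤ C5 n := by
  have h1 := sstep c5_step 0 n
  rw [show C5 0 = 0 from rfl, Nat.zero_add] at h1
  exact h1

lemma c7_step : ∀ n, C7 n + 1 ≤ C7 (n + 1) := by
  intro n
  have h1 := C7_succ n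
  have h2 : 1 ≤ 2 ^ C7 n := Nat.one_le_two_pow
  have h3 : C5 1 ≤ C5 (2 ^ C7 n) := c5_mono h2
  have h3' : C5 1 = 2 := rfl
  have h4 : C5 (2 ^ C7 n) ≤ C4 (C5 (2 ^ C7 n)) := c4_le _
  have h5 : (4:ℕ) ≤ 2 ^ C4 (C5 (2 ^ C7 n)) := by
    calc (4:ℕ) = 2 ^ 2 := by norm_num
    _ ≤ _ := pow_mono (by omega)
  have h6 : 4 ≤ C2 (2 ^ C4 (C5 (2 ^ C7 n))) := le_trans h5 (c2_le _)
  have h7 : (16:ℕ) ≤ 2 ^ C2 (2 ^ C4 (C5 (2 ^ C7 n))) := by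
    calc (16:ℕ) = 2 ^ 4 := by norm_num
    _ ≤ _ := pow_mono h6
  omega

lemma c7_mono : Monotone C7 := smono c7_step

/-! ### Ackermann helpers -/

lemma ack_add_le (k a s : ℕ) : ack k a + s ≤ ack k (a + s) :=
  sstep (fun n => Nat.succ_le_of_lt (ack_strictMono_right k (Nat.lt_succ_self n))) a s

/-! ### Growth lemmas -/

lemma L2 : ∀ m : ℕ, ack 4 m + 3 ≤ C2 (m + 4) := by
  intro m
  induction m with
  | zero =>
      have h : ack 4 0 = 13 := by rw [ack_succ_zero, ack_three]; norm_num
      have h2 : C2 (0 + 4) = 2059 := rfl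
      rw [h, h2]
      norm_num
  | succ m ih =>
      have e1 : ack 4 (m + 1) = ack 3 (ack 4 m) := ack_succ_succ 3 m
      have e2 : ack 3 (ack 4 m) = 2 ^ (ack 4 m + 3) - 3 := ack_three _
      have e3 : (3:ℕ) ≤ 2 ^ (ack 4 m + 3) := by
        calc (3:ℕ) ≤ 2 ^ 3 := by norm_num
        _ ≤ _ := pow_mono (by omega)
      have h4 : 2 ^ (ack 4 m + 3) ≤ 2 ^ C2 (m + 4) :=
        pow_mono ih
      have h5 : C2 (m + 1 + 4) = C2 (m + 4) + 2 ^ C2 (m + 4) := C2_succ (m + 4)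
      omega

lemma C4_2_ge : 65536 ≤ C4 2 := by
  have hP : (2:ℕ) ^ 16 ≤ 2 ^ C2 (2 ^ 8) :=
    pow_mono (le_trans (by norm_num : (16:ℕ) ≤ 2 ^ 8) (c2_le (2 ^ 8)))
  rw [C4_two]
  obtain ⟨P, hP2⟩ : ∃ p, (2:ℕ) ^ C2 (2 ^ 8) = p := ⟨_, rfl⟩
  rw [hP2] at hP ⊢
  clear hP2
  omega

lemma L4 : ∀ m : ℕ, ack 5 m + 3 ≤ C4 (m + 2) := by
  intro m
  induction m with
  | zero =>
      show ack 5 0 + 3 ≤ C4 2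
      have h : ack 5 0 = 65533 := by
        rw [ack_succ_zero, show (4:ℕ) = 3+1 from rfl, ack_succ_succ, ack_succ_zero,
          ack_three, ack_three]
        norm_num
      rw [h]
      exact le_trans (by norm_num) C4_2_ge
  | succ m ih =>
      have hC4 : C4 (m + 1 + 2) = C4 (m + 2) + 2 ^ C2 (2 ^ C4 (m + 2)) - 1 := C4_ss (m + 1)
      have hx4 : 4 ≤ C4 (m + 2) := by have := ack_pos 5 m; omega
      have ha : C4 (m + 2) + 12 ≤ 2 ^ C4 (m + 2) := lin hx4
      have hb : C2 (C4 (m + 2) + 4) ≤ C2 (2 ^ C4 (m + 2)) := c2_mono (by omega)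
      have hc : ack 4 (C4 (m + 2)) + 3 ≤ C2 (2 ^ C4 (m + 2)) := le_trans (L2 _) hb
      have hd : 2 ^ (ack 4 (C4 (m + 2)) + 3) ≤ 2 ^ C2 (2 ^ C4 (m + 2)) :=
        pow_mono hc
      have he : ack 4 (C4 (m + 2)) + 3 + 12 ≤ 2 ^ (ack 4 (C4 (m + 2)) + 3) :=
        lin (by have := ack_pos 4 (C4 (m + 2)); omega)
      have hf : ack 4 (ack 5 m + 3) ≤ ack 4 (C4 (m + 2)) := ack_mono_right 4 ih
      have hg : ack 4 (ack 5 m) + 3 ≤ ack 4 (ack 5 m + 3) := ack_add_le 4 (ack 5 m) 3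
      have hs : ack 5 (m + 1) = ack 4 (ack 5 m) := ack_succ_succ 4 m
      omega

lemma L5 : ∀ m : ℕ, ack 6 m + 3 ≤ C5 (m + 3) := by
  intro m
  induction m with
  | zero =>
      have hC53 := C5_ss 1
      rw [show C5 (1 + 1) = C5 2 from congrArg C5 (by norm_num)] at hC53
      rw [show C5 (1 + 2) = C5 (0 + 3) from congrArg C5 (by norm_num)] at hC53
      have h3 : 2 ≤ C4 2 := le_trans (by norm_num) C4_2_ge
      have h4 : (4:ℕ) ≤ 2 ^ C4 2 :=
        le_trans (by norm_num : (4:ℕ) ≤ 2 ^ 2) (pow_mono h3)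
      have h5 : 2 + 2 ≤ C5 2 := by
        rw [C5_two]
        exact Nat.add_le_add_left (le_trans (by norm_num) h4) 2
      have h6 : C4 (2 + 2) ≤ C4 (C5 2) := c4_mono h5
      have h7 : ack 5 2 + 3 ≤ C4 (C5 2) := le_trans (L4 2) h6
      have h8 : 2 ^ (ack 5 2 + 3) ≤ 2 ^ C4 (C5 2) :=
        pow_mono h7
      have hp : 1 ≤ ack 5 2 := ack_pos 5 2
      have h9 : ack 5 2 + 3 + 12 ≤ 2 ^ (ack 5 2 + 3) := by
        refine lin ?_
        calc (4:ℕ) = 1 + 3 := by norm_num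
        _ ≤ ack 5 2 + 3 := Nat.add_le_add_right hp 3
      have h10 : ack 6 0 = ack 5 1 := ack_succ_zero 5
      have h11 : ack 5 1 ≤ ack 5 2 := ack_mono_right 5 (by norm_num)
      calc ack 6 0 + 3 = ack 5 1 + 3 := by rw [h10]
      _ ≤ ack 5 2 + 3 := Nat.add_le_add_right h11 3
      _ ≤ ack 5 2 + 3 + 12 := Nat.le_add_right _ 12
      _ ≤ 2 ^ (ack 5 2 + 3) := h9
      _ ≤ 2 ^ C4 (C5 2) := h8
      _ ≤ C5 2 + 2 ^ C4 (C5 2) := Nat.le_add_left _ _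
      _ = C5 (0 + 3) := hC53.symm
  | succ m ih =>
      have hC5 : C5 (m + 1 + 3) = C5 (m + 3) + 2 ^ C4 (C5 (m + 3)) := C5_ss (m + 2)
      have h2 : C4 (ack 6 m + 1 + 2) ≤ C4 (C5 (m + 3)) := c4_mono (by omega)
      have h3 : ack 5 (ack 6 m + 1) + 3 ≤ C4 (C5 (m + 3)) := le_trans (L4 (ack 6 m + 1)) h2
      have h4 : ack 5 (ack 6 m) + 1 ≤ ack 5 (ack 6 m + 1) := ack_add_le 5 (ack 6 m) 1
      have h5 : 2 ^ (ack 5 (ack 6 m) + 4) ≤ 2 ^ C4 (C5 (m + 3)) :=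
        pow_mono (by omega)
      have h6 : ack 5 (ack 6 m) + 4 + 12 ≤ 2 ^ (ack 5 (ack 6 m) + 4) := lin (by omega)
      have hs : ack 6 (m + 1) = ack 5 (ack 6 m) := ack_succ_succ 5 m
      omega

lemma hC71 : 11 ≤ C7 1 := by
  have h2 : 4 ≤ C4 2 := le_trans (by norm_num) C4_2_ge
  have h3 : (2:ℕ) ^ 4 ≤ 2 ^ C4 2 := pow_mono h2
  have h4 : 2 ^ C4 2 ≤ C2 (2 ^ C4 2) := c2_le _
  have h5 : (2:ℕ) ^ 16 ≤ 2 ^ C2 (2 ^ C4 2) :=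
    pow_mono (le_trans (le_trans (by norm_num : (16:ℕ) ≤ 2 ^ 4) h3) h4)
  rw [C7_one]
  obtain ⟨Q, hQ⟩ : ∃ q, (2:ℕ) ^ C2 (2 ^ C4 2) = q := ⟨_, rfl⟩
  rw [hQ] at h5 ⊢
  clear hQ
  omega

/-- The core inequality for one `H ∘ C6` layer. -/
lemma inner_ge (w : ℕ) (hw : 6 ≤ w) : w + 8 ≤ 2 ^ C2 (2 ^ C4 w) := by
  have h1 : w ≤ C4 w := c4_le w
  have h2 : 2 ^ w ≤ 2 ^ C4 w := pow_mono h1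
  have h3 : 2 ^ w ≤ C2 (2 ^ C4 w) := le_trans h2 (c2_le _)
  have h4 : w + 1 ≤ 2 ^ w := Nat.lt_two_pow_self (n := w)
  have h5 : 2 ^ (w + 1) ≤ 2 ^ C2 (2 ^ C4 w) :=
    pow_mono (by omega)
  have h6 : 2 ^ (w + 1) = 2 * 2 ^ w := by rw [pow_succ]; ring
  omega

lemma L7 : ∀ m : ℕ, ack 7 m + 3 ≤ C7 (m + 2) := by
  intro m
  induction m with
  | zero =>
      have h1 : C7 (0 + 2) = C7 1 + 2 ^ C2 (2 ^ C4 (C5 (2 ^ C7 1))) - 8 := C7_succ 1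
      have hz : 11 ≤ C7 1 := hC71
      rw [show ack 7 0 = ack 6 1 from ack_succ_zero 6, h1]
      obtain ⟨z, hzd⟩ : ∃ z, C7 1 = z := ⟨_, rfl⟩
      rw [hzd] at hz ⊢
      clear h1 hzd
      have ht : (16:ℕ) ≤ 2 ^ z :=
        le_trans (by norm_num : (16:ℕ) ≤ 2 ^ 4)
          (pow_mono (by omega))
      have h2 : C5 (1 + 3) ≤ C5 (2 ^ z) := c5_mono (by omega)
      have h3 : ack 6 1 + 3 ≤ C5 (2 ^ z) := le_trans (L5 1) h2
      obtain ⟨A, hAd⟩ : ∃ a, ack 6 1 = a := ⟨_, rfl⟩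
      rw [hAd] at h3 ⊢
      clear h2 hAd
      have h4 : 2 ^ z ≤ C5 (2 ^ z) := c5_le _
      have h5 : C5 (2 ^ z) + 8 ≤ 2 ^ C2 (2 ^ C4 (C5 (2 ^ z))) := inner_ge _ (by omega)
      omega
  | succ m ih =>
      have h1 : C7 (m + 1 + 2) = C7 (m + 2) + 2 ^ C2 (2 ^ C4 (C5 (2 ^ C7 (m + 2)))) - 8 :=
        C7_succ (m + 2)
      have hz4 : 4 ≤ C7 (m + 2) := by have := ack_pos 7 m; omega
      have ha : C7 (m + 2) + 12 ≤ 2 ^ C7 (m + 2) := lin hz4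
      have hb : C5 (ack 7 m + 3 + 3) ≤ C5 (2 ^ C7 (m + 2)) := c5_mono (by omega)
      have hc : ack 6 (ack 7 m + 3) + 3 ≤ C5 (2 ^ C7 (m + 2)) :=
        le_trans (L5 (ack 7 m + 3)) hb
      have hd : ack 6 (ack 7 m) + 3 ≤ ack 6 (ack 7 m + 3) := ack_add_le 6 (ack 7 m) 3
      have he : C5 (2 ^ C7 (m + 2)) + 8 ≤ 2 ^ C2 (2 ^ C4 (C5 (2 ^ C7 (m + 2)))) := by
        refine inner_ge _ ?_
        have := ack_pos 6 (ack 7 m + 3)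
        omega
      have hs : ack 7 (m + 1) = ack 6 (ack 7 m) := ack_succ_succ 6 m
      omega

/-- Slack propagation through the outer layers of `G`, compared with `H 1`. -/
lemma slackG (u K : ℕ) (h : K + 2 ≤ C5 u) :
    2 ^ C2 (2 ^ C4 2) + K ≤ 2 ^ C2 (2 ^ C4 (C5 u)) := by
  calc 2 ^ C2 (2 ^ C4 2) + K
      ≤ 2 ^ (C2 (2 ^ C4 2) + K) := sstep pstep _ K
  _ ≤ 2 ^ C2 (2 ^ C4 2 + K) :=
      pow_mono (sstep c2_step _ K)
  _ ≤ 2 ^ C2 (2 ^ (C4 2 + K)) :=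
      pow_mono (c2_mono (sstep pstep _ K))
  _ ≤ 2 ^ C2 (2 ^ C4 (2 + K)) :=
      pow_mono (c2_mono (pow_mono (sstep c4_step 2 K)))
  _ ≤ 2 ^ C2 (2 ^ C4 (C5 u)) :=
      pow_mono (c2_mono (pow_mono (c4_mono (by omega))))

lemma L9 : ∀ m : ℕ, ack 8 m + 4 ≤ C9 (m + 1) := by
  intro m
  induction m with
  | zero =>
      rw [C9_eq_D]
      rw [show D (G (H 1 - 8) - 8) (H 1) (0 + 1) = G (H 1 - 8) - 8 from D_one _ _]
      have hH0 : H 1 - 8 = C7 1 := by rw [H_one, C7_one]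
      rw [hH0, G_eq, show ack 8 0 = ack 7 1 from ack_succ_zero 7]
      clear hH0
      have hz : 11 ≤ C7 1 := hC71
      obtain ⟨z, hzd⟩ : ∃ z, C7 1 = z := ⟨_, rfl⟩
      rw [hzd] at hz ⊢
      clear hzd
      have ha : z + 12 ≤ 2 ^ z := lin (by omega)
      have hb : C7 (z + 2) ≤ C7 (2 ^ z) := c7_mono (by omega)
      have hc : ack 7 z + 3 ≤ C7 (2 ^ z) := le_trans (L7 z) hb
      obtain ⟨k, hk⟩ := Nat.exists_eq_add_of_le hz
      have hd : ack 7 1 + (10 + k) ≤ ack 7 (1 + (10 + k)) := ack_add_le 7 1 (10 + k)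
      have he : ack 7 (1 + (10 + k)) = ack 7 z := by
        rw [hk]; exact congrArg (ack 7) (by omega)
      obtain ⟨A, hAd⟩ : ∃ a, ack 7 1 = a := ⟨_, rfl⟩
      rw [hAd] at hd ⊢
      clear hAd
      have hf : C7 (2 ^ z) ≤ 2 ^ C7 (2 ^ z) := le_two_pow _
      have hg2 : 2 ^ C7 (2 ^ z) ≤ C5 (2 ^ C7 (2 ^ z)) := c5_le _
      have i5 : C5 (2 ^ C7 (2 ^ z)) ≤ 2 ^ C2 (2 ^ C4 (C5 (2 ^ C7 (2 ^ z)))) :=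
        le_trans (le_trans (le_trans (c4_le _) (le_two_pow _)) (c2_le _)) (le_two_pow _)
      omega
  | succ m ih =>
      rw [C9_eq_D] at ih ⊢
      have h1 : D (G (H 1 - 8) - 8) (H 1) (m + 1 + 1) =
          D (G (H 1 - 8) - 8) (H 1) (m + 1) + G (D (G (H 1 - 8) - 8) (H 1) (m + 1)) - H 1 :=
        D_ss _ _ m
      have hG := G_eq (D (G (H 1 - 8) - 8) (H 1) (m + 1))
      have hz4 : 4 ≤ D (G (H 1 - 8) - 8) (H 1) (m + 1) :=
        le_trans (Nat.le_add_left 4 (ack 8 m)) ih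
      have ha : D (G (H 1 - 8) - 8) (H 1) (m + 1) + 12 ≤
          2 ^ D (G (H 1 - 8) - 8) (H 1) (m + 1) := lin hz4
      have hb : C7 (D (G (H 1 - 8) - 8) (H 1) (m + 1) + 2) ≤
          C7 (2 ^ D (G (H 1 - 8) - 8) (H 1) (m + 1)) := c7_mono (by omega)
      have hc : ack 7 (D (G (H 1 - 8) - 8) (H 1) (m + 1)) + 3 ≤
          C7 (2 ^ D (G (H 1 - 8) - 8) (H 1) (m + 1)) := le_trans (L7 _) hb
      have hd : ack 7 (ack 8 m + 4) ≤ ack 7 (D (G (H 1 - 8) - 8) (H 1) (m + 1)) :=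
        ack_mono_right 7 ih
      have he : ack 7 (ack 8 m) + 4 ≤ ack 7 (ack 8 m + 4) := ack_add_le 7 (ack 8 m) 4
      have hs : ack 8 (m + 1) = ack 7 (ack 8 m) := ack_succ_succ 7 m
      have hf : C7 (2 ^ D (G (H 1 - 8) - 8) (H 1) (m + 1)) ≤
          2 ^ C7 (2 ^ D (G (H 1 - 8) - 8) (H 1) (m + 1)) := le_two_pow _
      have hg2 : 2 ^ C7 (2 ^ D (G (H 1 - 8) - 8) (H 1) (m + 1)) ≤
          C5 (2 ^ C7 (2 ^ D (G (H 1 - 8) - 8) (H 1) (m + 1))) := c5_le _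
      have hk2 : (ack 8 (m + 1) + 4) + 2 ≤
          C5 (2 ^ C7 (2 ^ D (G (H 1 - 8) - 8) (H 1) (m + 1))) := by omega
      have hsl := slackG (2 ^ C7 (2 ^ D (G (H 1 - 8) - 8) (H 1) (m + 1)))
        (ack 8 (m + 1) + 4) hk2
      have hH1 : H 1 = 2 ^ C2 (2 ^ C4 2) := H_one
      obtain ⟨P, hP⟩ : ∃ p, (2:ℕ) ^ C2 (2 ^ C4 2) = p := ⟨_, rfl⟩
      rw [hP] at hH1 hsl
      clear hP
      omega

theorem stmt_5 : ∀ m : ℕ, C9 (m + 2) ≥ ack 8 m + 4 := by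
  intro m
  have h1 := L9 (m + 1)
  have h2 : ack 8 m ≤ ack 8 (m + 1) := ack_mono_right 8 (Nat.le_succ m)
  have e : C9 (m + 1 + 1) = C9 (m + 2) := congrArg C9 (by omega)
  omega
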